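/- Let λ > 0, let B_0 be a λ-contractive-set CBF (i.e., min_{u∈U} B_0(f(x,u)) ≤ −λ for all x ∈ S_{B_0}) satisfying h(x) + kλ ≤ B_0(x) for all x ∈ S_{B_0}, and define B_k(x) as the minimum over input sequences in U^k of max{ max_{0 ≤ t ≤ k-1} (h(x_t) + tλ), B_0(x_k) }. Then B_k is a λ-contractive-set CBF for the original constraint: h(x) ≤ 0 for all x with B_k(x) ≤ 0, and for all such x there exists u ∈ U with B_k(f(x,u)) ≤ −λ. -/

import Mathlib

/-- Closed-loop trajectory: x_0 = x, x_{t+1} = f(x_t, u_t). -/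
def traj {σ υ : Type*} (f : σ → υ → σ) (x : σ) (u : ℕ → υ) : ℕ → σ
  | 0 => x
  | t + 1 => f (traj f x u t) (u t)

/-- Cost max{ max_{0 ≤ t ≤ k-1} (h(x_t) + t·λ), B_0(x_k) }. -/
noncomputable def reachCostContr {σ υ : Type*} (f : σ → υ → σ) (h B0 : σ → ℝ)
    (lam : ℝ) (k : ℕ) (x : σ) (u : ℕ → υ) : ℝ :=
  max (⨆ t : Fin k, (h (traj f x u t) + (t : ℕ) * lam)) (B0 (traj f x u k))

/-- if λ > 0 and B_0 is a λ-contractive-set CBF with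
h + kλ ≤ B_0 on S_{B_0}, then B_k (the attained minimum of the reachability
cost with linearly increasing tightening) is a λ-contractive-set CBF for the
original constraint. -/
theorem reachability_generates_contractive_cbf
    {σ υ : Type*} (f : σ → υ → σ) (h : σ → ℝ) (U : Set υ) (B0 : σ → ℝ)
    (lam : ℝ) (hlam : 0 < lam) (k : ℕ) (hk : 1 ≤ k)
    -- B_0 is a λ-contractive-set CBF with the strengthened condition:
    (hSB0_ne : {x : σ | B0 x ≤ 0}.Nonempty)
    (hSB0_tight : ∀ x, B0 x ≤ 0 → h x + (k : ℝ) * lam ≤ B0 x)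
    (hSB0_contr : ∀ x, B0 x ≤ 0 → ∃ u ∈ U, B0 (f x u) ≤ -lam)
    -- B_k is the attained minimum of the reachability cost:
    (Bk : σ → ℝ)
    (hBk_att : ∀ x : σ, ∃ u : ℕ → υ, (∀ t, u t ∈ U) ∧
      Bk x = reachCostContr f h B0 lam k x u)
    (hBk_lb : ∀ (x : σ) (u : ℕ → υ), (∀ t, u t ∈ U) →
      Bk x ≤ reachCostContr f h B0 lam k x u) :
    ∀ x, Bk x ≤ 0 → h x ≤ 0 ∧ ∃ u ∈ U, Bk (f x u) ≤ -lam := by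
  intro x hx
  obtain ⟨u, hu, hequ⟩ := hBk_att x
  have hne : Nonempty (Fin k) := ⟨⟨0, hk⟩⟩
  have hcost : reachCostContr f h B0 lam k x u ≤ 0 := hequ ▸ hx
  have hsup : (⨆ t : Fin k, (h (traj f x u t) + (t : ℕ) * lam)) ≤ 0 :=
    le_trans (le_max_left _ _) hcost
  have hB0end : B0 (traj f x u k) ≤ 0 := le_trans (le_max_right _ _) hcost
  have hbdd : BddAbove (Set.range fun t : Fin k => h (traj f x u t) + (t : ℕ) * lam) :=
    Set.Finite.bddAbove (Set.finite_range _)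
  have hx0 : h x ≤ 0 := by
    have := (le_ciSup hbdd (⟨0, hk⟩ : Fin k)).trans hsup
    simpa [traj] using this
  refine ⟨hx0, ?_⟩
  obtain ⟨w, hw, hwc⟩ := hSB0_contr _ hB0end
  set v : ℕ → υ := fun t => if t = k - 1 then w else u (t + 1) with hv
  have hvU : ∀ t, v t ∈ U := by
    intro t; simp only [hv]; split
    · exact hw
    · exact hu _
  have htraj : ∀ t, t ≤ k - 1 → traj f (f x (u 0)) v t = traj f x u (t + 1) := by
    intro t
    induction t with
    | zero => intro _; rfl
    | succ n ih =>
      intro hle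
      have hn : n < k - 1 := lt_of_lt_of_le (Nat.lt_succ_self n) hle
      have := ih (le_of_lt hn)
      show f (traj f (f x (u 0)) v n) (v n) = f (traj f x u (n + 1)) (u (n + 1))
      rw [this]
      simp [hv, Nat.ne_of_lt hn]
  have hend : traj f (f x (u 0)) v k = f (traj f x u k) w := by
    have hk1 : k = (k - 1) + 1 := (Nat.succ_pred_eq_of_pos hk).symm
    rw [hk1]
    show f (traj f (f x (u 0)) v (k - 1)) (v (k - 1)) = f (traj f x u (k - 1 + 1)) w
    rw [htraj (k - 1) le_rfl]
    simp [hv]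
  refine ⟨u 0, hu 0, ?_⟩
  calc Bk (f x (u 0)) ≤ reachCostContr f h B0 lam k (f x (u 0)) v := hBk_lb _ _ hvU
    _ ≤ -lam := by
      apply max_le
      · apply ciSup_le
        intro t
        rw [htraj t (Nat.le_pred_of_lt t.isLt)]
        rcases lt_or_eq_of_le (Nat.succ_le_of_lt t.isLt) with h1 | h1
        · have hle : h (traj f x u ((t : ℕ) + 1)) + (((t : ℕ) : ℝ) + 1) * lam ≤ 0 := by
            have := (le_ciSup hbdd (⟨(t : ℕ) + 1, h1⟩ : Fin k)).trans hsup
            simpa [add_mul] using this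
          nlinarith
        · have htight := hSB0_tight _ hB0end
          rw [show (t : ℕ) + 1 = k from h1]
          have hcast : ((t : ℕ) : ℝ) + 1 = (k : ℝ) := by exact_mod_cast h1
          nlinarith
      · rw [hend]; exact hwc
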